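/- arXiv:1208.2760 — 8 statements merged into one kernel-verified Lean document; each statement's English description precedes it below -/
import Mathlib

section
/- For a partitioned cellular automaton P = (ℤ, (Q₁,...,Qₘ), (n₁,...,nₘ), f), the local function f : Q₁×···×Qₘ → Q₁×···×Qₘ is injective if and only if the global function F : Conf(Q) → Conf(Q), defined by F(α)(x) = f(pr₁(α(x+n₁)),...,prₘ(α(x+nₘ))), is injective. -/
theorem stmt4 {m : ℕ} (Q : Fin m → Type*) [∀ i, Fintype (Q i)] [∀ i, Nonempty (Q i)]
    (n : Fin m → ℤ) (f : (∀ i, Q i) → (∀ i, Q i)) :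
    Function.Injective f ↔
      Function.Injective
        (fun (α : ℤ → ∀ i, Q i) => fun (x : ℤ) => f (fun i => α (x + n i) i)) := by
  constructor
  · intro hf α β h
    funext y i
    have h1 := congrFun h (y - n i)
    have h2 := hf h1
    have := congrFun h2 i
    simpa using this
  · intro hF a b hab
    have h : (fun (x : ℤ) => f (fun i => (fun _ : ℤ => a) (x + n i) i))
        = fun (x : ℤ) => f (fun i => (fun _ : ℤ => b) (x + n i) i) := by
      funext x; simpa using hab
    have := hF (a₁ := fun _ => a) (a₂ := fun _ => b) h
    exact congrFun this 0
end

section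
/- Given a 2-neighbor PCA P = (ℤ, (C,R), (0,−1), f) with injective local function f, the 4-neighbor CA A with state set Q̃ = {0,...,4|C||R|−1} and local function f̃ defined by: f̃(q₋₂,q₋₁,q₀,q₁) = φ̂(f(φ̂_C⁻¹(p_C(q₀)), φ̂_R⁻¹(p_R(q₋₁)))) if (q₋₁,q₀) ∈ B_R and (q₀,q₁) ∈ B_C; f̃(q₋₂,q₋₁,q₀,q₁) = φ̌(f(φ̂_C⁻¹(p_C(q₋₁)), φ̂_R⁻¹(p_R(q₋₂)))) if (q₋₂,q₋₁) ∈ B_R and (q₋₁,q₀) ∈ B_C; and f̃(q₋₂,q₋₁,q₀,q₁) = p_C(q₀) + p_R(q₋₁) otherwise — has an injective global function, i.e., A is a reversible CA. -/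
open scoped Classical

noncomputable section

/-- Heavy-particle part of a state: `p_C(q) = 2·sR·(q / (2·sR))`. -/
def pC (sR q : ℕ) : ℕ := 2 * sR * (q / (2 * sR))

/-- Light-particle part of a state: `p_R(q) = q mod (2·sR)`. -/
def pR (sR q : ℕ) : ℕ := q % (2 * sR)

/-- All heavy particles `C̃ = {2k·sR : 0 ≤ k ≤ 2sC−1}`. -/
def Ctil (sC sR : ℕ) : Set ℕ := {c | ∃ k < 2 * sC, c = 2 * k * sR}

/-- All light particles `R̃ = {0,…,2sR−1}`. -/
def Rtil (sR : ℕ) : Set ℕ := {r | r < 2 * sR}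

/-- `Ĉ = {2k·sR : 0 ≤ k ≤ sC−1}`. -/
def Chat (sC sR : ℕ) : Set ℕ := {c | ∃ k < sC, c = 2 * k * sR}

/-- `Č = {2(k+sC)·sR : 0 ≤ k ≤ sC−1}`. -/
def Ccheck (sC sR : ℕ) : Set ℕ := {c | ∃ k < sC, c = 2 * (k + sC) * sR}

/-- `R̂ = {0,…,sR−1}`. -/
def Rhat (sR : ℕ) : Set ℕ := {r | r < sR}

/-- `Ř = {sR,…,2sR−1}`. -/
def Rcheck (sR : ℕ) : Set ℕ := {r | sR ≤ r ∧ r < 2 * sR}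

/-- Balanced pair of states w.r.t. heavy particles. -/
def BC (sC sR q1 q2 : ℕ) : Prop :=
  pC sR q1 ∈ Chat sC sR ∧ pC sR q2 ∈ Ccheck sC sR ∧
    pC sR q1 + pC sR q2 = 2 * (2 * sC - 1) * sR

/-- Balanced pair of states w.r.t. light particles. -/
def BR (sR q1 q2 : ℕ) : Prop :=
  pR sR q1 ∈ Rhat sR ∧ pR sR q2 ∈ Rcheck sR ∧
    pR sR q1 + pR sR q2 = 2 * sR - 1

/-- `φ̂_C : C → Ĉ` built from an arbitrary bijection `φC` of `C = Fin sC`. -/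
def phatC (sC sR : ℕ) (φC : Fin sC ≃ Fin sC) (c : Fin sC) : ℕ := 2 * (φC c : ℕ) * sR

/-- `φ̂_R : R → R̂` built from an arbitrary bijection `φR` of `R = Fin sR`. -/
def phatR (sR : ℕ) (φR : Fin sR ≃ Fin sR) (r : Fin sR) : ℕ := (φR r : ℕ)

/-- `φ̌_C(c) = 2(2sC−1)sR − φ̂_C(c)`. -/
def pcheckC (sC sR : ℕ) (φC : Fin sC ≃ Fin sC) (c : Fin sC) : ℕ :=
  2 * (2 * sC - 1) * sR - phatC sC sR φC c

/-- `φ̌_R(r) = 2sR−1 − φ̂_R(r)`. -/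
def pcheckR (sR : ℕ) (φR : Fin sR ≃ Fin sR) (r : Fin sR) : ℕ :=
  2 * sR - 1 - phatR sR φR r

/-- `φ̂(c,r) = φ̂_C(c) + φ̂_R(r)`. -/
def phat (sC sR : ℕ) (φC : Fin sC ≃ Fin sC) (φR : Fin sR ≃ Fin sR)
    (q : Fin sC × Fin sR) : ℕ := phatC sC sR φC q.1 + phatR sR φR q.2

/-- `φ̌(c,r) = φ̌_C(c) + φ̌_R(r)`. -/
def pcheck (sC sR : ℕ) (φC : Fin sC ≃ Fin sC) (φR : Fin sR ≃ Fin sR)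
    (q : Fin sC × Fin sR) : ℕ := pcheckC sC sR φC q.1 + pcheckR sR φR q.2

/-- `Q̂ = {ĉ + r̂ : ĉ ∈ Ĉ, r̂ ∈ R̂}`. -/
def Qhat (sC sR : ℕ) : Set ℕ := {q | ∃ c ∈ Chat sC sR, ∃ r ∈ Rhat sR, q = c + r}

/-- `Q̌ = {č + ř : č ∈ Č, ř ∈ Ř}`. -/
def Qcheck (sC sR : ℕ) : Set ℕ := {q | ∃ c ∈ Ccheck sC sR, ∃ r ∈ Rcheck sR, q = c + r}

/-- `φ̂_C⁻¹` applied to a heavy particle (given as a natural number). -/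
def decC (sC sR : ℕ) [NeZero sC] (φC : Fin sC ≃ Fin sC) (c : ℕ) : Fin sC :=
  φC.symm ⟨(c / (2 * sR)) % sC, Nat.mod_lt _ (Nat.pos_of_ne_zero (NeZero.ne sC))⟩

/-- `φ̂_R⁻¹` applied to a light particle (given as a natural number). -/
def decR (sR : ℕ) [NeZero sR] (φR : Fin sR ≃ Fin sR) (r : ℕ) : Fin sR :=
  φR.symm ⟨r % sR, Nat.mod_lt _ (Nat.pos_of_ne_zero (NeZero.ne sR))⟩

/-- The three-case local function `f̃` of the 4-neighbor RNCCA `A`. -/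
def ftil (sC sR : ℕ) [NeZero sC] [NeZero sR] (φC : Fin sC ≃ Fin sC) (φR : Fin sR ≃ Fin sR)
    (f : Fin sC × Fin sR → Fin sC × Fin sR) (qm2 qm1 q0 q1 : ℕ) : ℕ :=
  if BR sR qm1 q0 ∧ BC sC sR q0 q1 then
    phat sC sR φC φR (f (decC sC sR φC (pC sR q0), decR sR φR (pR sR qm1)))
  else if BR sR qm2 qm1 ∧ BC sC sR qm1 q0 then
    pcheck sC sR φC φR (f (decC sC sR φC (pC sR qm1), decR sR φR (pR sR qm2)))
  else pC sR q0 + pR sR qm1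

/-- Global function `F̃` of `A` with neighborhood `(−2,−1,0,1)`. -/
def Ftil (sC sR : ℕ) [NeZero sC] [NeZero sR] (φC : Fin sC ≃ Fin sC) (φR : Fin sR ≃ Fin sR)
    (f : Fin sC × Fin sR → Fin sC × Fin sR) (α : ℤ → ℕ) (x : ℤ) : ℕ :=
  ftil sC sR φC φR f (α (x - 2)) (α (x - 1)) (α x) (α (x + 1))

/-- The encoding `τ̃`: `τ̃(α)(2x) = φ̂(α(x))`, `τ̃(α)(2x+1) = φ̌(α(x))`. -/
def tenc (sC sR : ℕ) (φC : Fin sC ≃ Fin sC) (φR : Fin sR ≃ Fin sR)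
    (α : ℤ → Fin sC × Fin sR) (y : ℤ) : ℕ :=
  if Even y then phat sC sR φC φR (α (y / 2)) else pcheck sC sR φC φR (α ((y - 1) / 2))

/-- Global function of the 2-neighbor PCA `P` with neighborhood `(0,−1)`. -/
def FP {C R : Type*} (f : C × R → C × R) (α : ℤ → C × R) (x : ℤ) : C × R :=
  f ((α x).1, (α (x - 1)).2)

end

-- ===== auxiliary development =====
noncomputable section Aux

set_option linter.unusedSectionVars false

variable (sC sR : ℕ) [NeZero sC] [NeZero sR] (φC : Fin sC ≃ Fin sC) (φR : Fin sR ≃ Fin sR)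
  (f : Fin sC × Fin sR → Fin sC × Fin sR)

lemma hsR : 0 < sR := Nat.pos_of_ne_zero (NeZero.ne sR)
lemma hsC : 0 < sC := Nat.pos_of_ne_zero (NeZero.ne sC)
lemma h2sR : 0 < 2 * sR := by have := hsR sR; omega

lemma pC_add_pR (q : ℕ) : pC sR q + pR sR q = q := Nat.div_add_mod q (2 * sR)

lemma pR_lt (q : ℕ) : pR sR q < 2 * sR := Nat.mod_lt _ (h2sR sR)

lemma split_pC (h : ℕ) {l : ℕ} (hl : l < 2 * sR) : pC sR (2 * sR * h + l) = 2 * sR * h := by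
  unfold pC
  rw [Nat.mul_add_div (h2sR sR), Nat.div_eq_of_lt hl]
  ring

lemma split_pR (h : ℕ) {l : ℕ} (hl : l < 2 * sR) : pR sR (2 * sR * h + l) = l := by
  unfold pR
  rw [Nat.mul_add_mod, Nat.mod_eq_of_lt hl]

lemma pC_mix (b c : ℕ) : pC sR (pC sR c + pR sR b) = pC sR c := by
  show pC sR (2 * sR * (c / (2*sR)) + pR sR b) = pC sR c
  rw [split_pC sR _ (pR_lt sR b)]; rfl

lemma pR_mix (b c : ℕ) : pR sR (pC sR c + pR sR b) = pR sR b := by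
  show pR sR (2 * sR * (c / (2*sR)) + pR sR b) = pR sR b
  rw [split_pR sR _ (pR_lt sR b)]

lemma pC_phat (v : Fin sC × Fin sR) :
    pC sR (phat sC sR φC φR v) = 2 * sR * (φC v.1 : ℕ) := by
  have h := (φR v.2).isLt
  unfold phat phatC phatR
  rw [show 2 * (φC v.1 : ℕ) * sR = 2 * sR * (φC v.1 : ℕ) by ring]
  exact split_pC sR _ (by omega)

lemma pR_phat (v : Fin sC × Fin sR) :
    pR sR (phat sC sR φC φR v) = (φR v.2 : ℕ) := by
  have h := (φR v.2).isLt
  unfold phat phatC phatR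
  rw [show 2 * (φC v.1 : ℕ) * sR = 2 * sR * (φC v.1 : ℕ) by ring]
  exact split_pR sR _ (by omega)

lemma pcheck_eq (v : Fin sC × Fin sR) :
    pcheck sC sR φC φR v = 2 * sR * (2 * sC - 1 - (φC v.1 : ℕ)) + (2 * sR - 1 - (φR v.2 : ℕ)) := by
  have h1 := (φC v.1).isLt
  unfold pcheck pcheckC pcheckR phatC phatR
  have : 2 * (2 * sC - 1) * sR - 2 * (φC v.1 : ℕ) * sR = 2 * sR * (2 * sC - 1 - (φC v.1 : ℕ)) := by
    rw [show 2 * sR * (2 * sC - 1 - (φC v.1 : ℕ)) = (2 * sC - 1 - (φC v.1 : ℕ)) * (2 * sR) by ring,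
      Nat.sub_mul]
    congr 1 <;> ring
  rw [this]

lemma pC_pcheck (v : Fin sC × Fin sR) :
    pC sR (pcheck sC sR φC φR v) = 2 * sR * (2 * sC - 1 - (φC v.1 : ℕ)) := by
  have h2 := (φR v.2).isLt
  have hp := hsR sR
  rw [pcheck_eq]
  exact split_pC sR _ (by omega)

lemma pR_pcheck (v : Fin sC × Fin sR) :
    pR sR (pcheck sC sR φC φR v) = 2 * sR - 1 - (φR v.2 : ℕ) := by
  have h2 := (φR v.2).isLt
  have hp := hsR sR
  rw [pcheck_eq]
  exact split_pR sR _ (by omega)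


/-- The two output states form a complementary (hat, check) pair. -/
def CompP (sC sR a b : ℕ) : Prop := BC sC sR a b ∧ BR sR a b

lemma chat_ccheck_disj {c : ℕ} (h1 : c ∈ Chat sC sR) (h2 : c ∈ Ccheck sC sR) : False := by
  obtain ⟨k, hk, rfl⟩ := h1
  obtain ⟨k', hk', h⟩ := h2
  have hp := hsR sR
  have : 2 * k = 2 * (k' + sC) := by
    have := Nat.eq_of_mul_eq_mul_right hp h
    omega
  omega

/-- `φ̂` and `φ̌` of the same value are a complementary pair. -/
lemma comp_phat_pcheck (v : Fin sC × Fin sR) :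
    CompP sC sR (phat sC sR φC φR v) (pcheck sC sR φC φR v) := by
  have h1 := (φC v.1).isLt
  have h2 := (φR v.2).isLt
  have hp := hsR sR
  have hc := hsC sC
  refine ⟨⟨?_, ?_, ?_⟩, ?_, ?_, ?_⟩
  · exact ⟨(φC v.1 : ℕ), h1, by rw [pC_phat]; ring⟩
  · refine ⟨sC - 1 - (φC v.1 : ℕ), by omega, ?_⟩
    rw [pC_pcheck]
    have : sC - 1 - (φC v.1 : ℕ) + sC = 2 * sC - 1 - (φC v.1 : ℕ) := by omega
    rw [this]; ring
  · rw [pC_phat, pC_pcheck]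
    have : (φC v.1 : ℕ) + (2 * sC - 1 - (φC v.1 : ℕ)) = 2 * sC - 1 := by omega
    calc 2 * sR * (φC v.1 : ℕ) + 2 * sR * (2 * sC - 1 - (φC v.1 : ℕ))
        = 2 * sR * ((φC v.1 : ℕ) + (2 * sC - 1 - (φC v.1 : ℕ))) := by ring
      _ = 2 * (2 * sC - 1) * sR := by rw [this]; ring
  · rw [pR_phat]; exact h2
  · rw [pR_pcheck]; exact ⟨by omega, by omega⟩
  · rw [pR_phat, pR_pcheck]; omega

/-- Decoding `φ̂_C(c)` back. -/
lemma decC_val {k : ℕ} (hk : k < sC) : decC sC sR φC (2 * sR * k) = φC.symm ⟨k, hk⟩ := by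
  unfold decC
  have hp := h2sR sR
  congr 1
  ext
  simp [Nat.mul_div_cancel_left _ hp, Nat.mod_eq_of_lt hk]

lemma decR_val {r : ℕ} (hr : r < sR) : decR sR φR r = φR.symm ⟨r, hr⟩ := by
  unfold decR
  congr 1
  ext
  simp [Nat.mod_eq_of_lt hr]

/-- Full decoding of `φ̂(w)` recovers `w`. -/
lemma decode_phat (w : Fin sC × Fin sR) :
    (decC sC sR φC (pC sR (phat sC sR φC φR w)),
      decR sR φR (pR sR (phat sC sR φC φR w))) = w := by
  rw [pC_phat, pR_phat, decC_val sC sR φC ((φC w.1).isLt), decR_val sR φR ((φR w.2).isLt)]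
  simp

lemma ftil_case1 {a b c d : ℕ} (h : BR sR b c ∧ BC sC sR c d) :
    ftil sC sR φC φR f a b c d
      = phat sC sR φC φR (f (decC sC sR φC (pC sR c), decR sR φR (pR sR b))) := by
  rw [ftil, if_pos h]

lemma ftil_case2 {a b c d : ℕ} (h1 : ¬(BR sR b c ∧ BC sC sR c d))
    (h2 : BR sR a b ∧ BC sC sR b c) :
    ftil sC sR φC φR f a b c d
      = pcheck sC sR φC φR (f (decC sC sR φC (pC sR b), decR sR φR (pR sR a))) := by
  rw [ftil, if_neg h1, if_pos h2]

lemma ftil_case3 {a b c d : ℕ} (h1 : ¬(BR sR b c ∧ BC sC sR c d))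
    (h2 : ¬(BR sR a b ∧ BC sC sR b c)) :
    ftil sC sR φC φR f a b c d = pC sR c + pR sR b := by
  rw [ftil, if_neg h1, if_neg h2]

/-- Key equivalence: case 1 holds at a cell iff the outputs at the cell and its
right neighbour form a complementary pair. -/
lemma key5 (a b c d e : ℕ) :
    (BR sR b c ∧ BC sC sR c d) ↔
      CompP sC sR (ftil sC sR φC φR f a b c d) (ftil sC sR φC φR f b c d e) := by
  constructor
  · intro h
    rw [ftil_case1 sC sR φC φR f h]
    have hnot : ¬(BR sR c d ∧ BC sC sR d e) := by
      rintro ⟨⟨hcd, -, -⟩, -⟩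
      exact absurd hcd (by have := h.1.2.1.1; simp [Rhat]; omega)
    rw [ftil_case2 sC sR φC φR f hnot h]
    exact comp_phat_pcheck sC sR φC φR _
  · intro hComp
    by_cases h1 : BR sR b c ∧ BC sC sR c d
    · exact h1
    exfalso
    by_cases h2 : BR sR a b ∧ BC sC sR b c
    · -- cell x is in case 2: its output is a check-state, not a hat-state
      rw [ftil_case2 sC sR φC φR f h1 h2] at hComp
      have hhat := hComp.1.1
      have hcheck : pC sR (pcheck sC sR φC φR
          (f (decC sC sR φC (pC sR b), decR sR φR (pR sR a)))) ∈ Ccheck sC sR := by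
        rw [pC_pcheck]
        set k : ℕ := (φC (f (decC sC sR φC (pC sR b), decR sR φR (pR sR a))).1 : ℕ) with hk
        have hklt : k < sC := Fin.isLt _
        have hc := hsC sC
        refine ⟨sC - 1 - k, by omega, ?_⟩
        have : sC - 1 - k + sC = 2 * sC - 1 - k := by omega
        rw [this]; ring
      exact chat_ccheck_disj sC sR hhat hcheck
    · -- cell x is in case 3
      rw [ftil_case3 sC sR φC φR f h1 h2] at hComp
      by_cases g1 : BR sR c d ∧ BC sC sR d e
      · -- cell x+1 in case 1: output is a hat-state, not a check-state
        rw [ftil_case1 sC sR φC φR f g1] at hComp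
        have hcheck := hComp.1.2.1
        have hhat : pC sR (phat sC sR φC φR
            (f (decC sC sR φC (pC sR d), decR sR φR (pR sR c)))) ∈ Chat sC sR := by
          rw [pC_phat]
          exact ⟨_, Fin.isLt _, by ring⟩
        exact chat_ccheck_disj sC sR hhat hcheck
      · rw [ftil_case3 sC sR φC φR f g1 h1] at hComp
        obtain ⟨⟨hC1, hC2, hC3⟩, hR1, hR2, hR3⟩ := hComp
        simp only [pC_mix, pR_mix] at hC1 hC2 hC3 hR1 hR2 hR3
        exact h1 ⟨⟨hR1, hR2, hR3⟩, hC1, hC2, hC3⟩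

/-- Decode a state of `A` into a state of `P`. -/
def decQ (q : ℕ) : Fin sC × Fin sR := (decC sC sR φC (pC sR q), decR sR φR (pR sR q))

lemma g_decQ (hf : Function.Injective f) (p : Fin sC × Fin sR) :
    Function.invFun f (decQ sC sR φC φR (phat sC sR φC φR (f p))) = p := by
  haveI : Nonempty (Fin sC × Fin sR) := ⟨(⟨0, hsC sC⟩, ⟨0, hsR sR⟩)⟩
  unfold decQ
  rw [decode_phat]
  exact Function.leftInverse_invFun hf p

/-- Reconstruction of the heavy part of `α x` from `β = F̃(α)`. -/
def Hrec (β : ℤ → ℕ) (x : ℤ) : ℕ :=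
  if CompP sC sR (β x) (β (x+1)) then
    2 * sR * ((φC ((Function.invFun f (decQ sC sR φC φR (β x))).1)) : ℕ)
  else if CompP sC sR (β (x-1)) (β x) then
    2 * (2 * sC - 1) * sR -
      2 * sR * ((φC ((Function.invFun f (decQ sC sR φC φR (β (x-1)))).1)) : ℕ)
  else pC sR (β x)

/-- Reconstruction of the light part of `α x` from `β = F̃(α)`. -/
def Lrec (β : ℤ → ℕ) (x : ℤ) : ℕ :=
  if CompP sC sR (β (x+1)) (β (x+2)) then
    ((φR ((Function.invFun f (decQ sC sR φC φR (β (x+1)))).2)) : ℕ)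
  else if CompP sC sR (β x) (β (x+1)) then
    2 * sR - 1 - ((φR ((Function.invFun f (decQ sC sR φC φR (β x))).2)) : ℕ)
  else pR sR (β (x+1))

lemma Ftil_apply (α : ℤ → ℕ) (x : ℤ) :
    Ftil sC sR φC φR f α x
      = ftil sC sR φC φR f (α (x-2)) (α (x-1)) (α x) (α (x+1)) := rfl

lemma keyE (α : ℤ → ℕ) (x : ℤ) :
    (BR sR (α (x-1)) (α x) ∧ BC sC sR (α x) (α (x+1))) ↔
      CompP sC sR (Ftil sC sR φC φR f α x) (Ftil sC sR φC φR f α (x+1)) := by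
  rw [Ftil_apply, Ftil_apply, show x+1-2 = x-1 by ring, show x+1-1 = x by ring]
  exact key5 sC sR φC φR f _ _ _ _ _

lemma recon (hf : Function.Injective f) (α : ℤ → ℕ) (x : ℤ) :
    pC sR (α x) = Hrec sC sR φC φR f (Ftil sC sR φC φR f α) x ∧
      pR sR (α x) = Lrec sC sR φC φR f (Ftil sC sR φC φR f α) x := by
  set β := Ftil sC sR φC φR f α with hβ
  have key0 := keyE sC sR φC φR f α x
  have keym : (BR sR (α (x-2)) (α (x-1)) ∧ BC sC sR (α (x-1)) (α x)) ↔
      CompP sC sR (β (x-1)) (β x) := by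
    have := keyE sC sR φC φR f α (x-1)
    rwa [show x-1-1 = x-2 by ring, show x-1+1 = x by ring] at this
  have keyp : (BR sR (α x) (α (x+1)) ∧ BC sC sR (α (x+1)) (α (x+2))) ↔
      CompP sC sR (β (x+1)) (β (x+2)) := by
    have := keyE sC sR φC φR f α (x+1)
    rwa [show x+1-1 = x by ring, show x+1+1 = x+2 by ring] at this
  have hβx : β x = ftil sC sR φC φR f (α (x-2)) (α (x-1)) (α x) (α (x+1)) := rfl
  have hβp : β (x+1) = ftil sC sR φC φR f (α (x-1)) (α x) (α (x+1)) (α (x+2)) := by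
    show ftil sC sR φC φR f (α (x+1-2)) (α (x+1-1)) (α (x+1)) (α (x+1+1)) = _
    rw [show x+1-2 = x-1 by ring, show x+1-1 = x by ring, show x+1+1 = x+2 by ring]
  have hβm : β (x-1) = ftil sC sR φC φR f (α (x-3)) (α (x-2)) (α (x-1)) (α x) := by
    show ftil sC sR φC φR f (α (x-1-2)) (α (x-1-1)) (α (x-1)) (α (x-1+1)) = _
    rw [show x-1-2 = x-3 by ring, show x-1-1 = x-2 by ring, show x-1+1 = x by ring]
  constructor
  · -- heavy part
    by_cases hE : BR sR (α (x-1)) (α x) ∧ BC sC sR (α x) (α (x+1))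
    · have hc := key0.1 hE
      simp only [Hrec]
      rw [if_pos hc, hβx, ftil_case1 sC sR φC φR f hE, g_decQ sC sR φC φR f hf]
      obtain ⟨k, hk, hrep⟩ := hE.2.1
      have hrep' : pC sR (α x) = 2 * sR * k := by rw [hrep]; ring
      rw [hrep', decC_val sC sR φC hk]
      simp
    · by_cases hE' : BR sR (α (x-2)) (α (x-1)) ∧ BC sC sR (α (x-1)) (α x)
      · have hc' := keym.1 hE'
        have hnc : ¬ CompP sC sR (β x) (β (x+1)) := fun h => hE (key0.2 h)
        simp only [Hrec]
        rw [if_neg hnc, if_pos hc', hβm, ftil_case1 sC sR φC φR f hE',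
          g_decQ sC sR φC φR f hf]
        obtain ⟨k, hk, hrep⟩ := hE'.2.1
        have hrep' : pC sR (α (x-1)) = 2 * sR * k := by rw [hrep]; ring
        rw [hrep', decC_val sC sR φC hk]
        simp only [Equiv.apply_symm_apply]
        have hsum : pC sR (α x) + pC sR (α (x-1)) = 2 * (2 * sC - 1) * sR := by
          rw [Nat.add_comm]; exact hE'.2.2.2
        rw [← hrep']
        exact eq_tsub_of_add_eq hsum
      · have hnc : ¬ CompP sC sR (β x) (β (x+1)) := fun h => hE (key0.2 h)
        have hnc' : ¬ CompP sC sR (β (x-1)) (β x) := fun h => hE' (keym.2 h)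
        simp only [Hrec]
        rw [if_neg hnc, if_neg hnc', hβx, ftil_case3 sC sR φC φR f hE hE', pC_mix]
  · -- light part
    by_cases hEp : BR sR (α x) (α (x+1)) ∧ BC sC sR (α (x+1)) (α (x+2))
    · have hc := keyp.1 hEp
      simp only [Lrec]
      rw [if_pos hc, hβp, ftil_case1 sC sR φC φR f hEp, g_decQ sC sR φC φR f hf]
      have hlt : pR sR (α x) < sR := hEp.1.1
      rw [decR_val sR φR hlt]
      simp
    · by_cases hE : BR sR (α (x-1)) (α x) ∧ BC sC sR (α x) (α (x+1))
      · have hc := key0.1 hE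
        have hncp : ¬ CompP sC sR (β (x+1)) (β (x+2)) := fun h => hEp (keyp.2 h)
        simp only [Lrec]
        rw [if_neg hncp, if_pos hc, hβx, ftil_case1 sC sR φC φR f hE,
          g_decQ sC sR φC φR f hf]
        have hlt : pR sR (α (x-1)) < sR := hE.1.1
        rw [decR_val sR φR hlt]
        simp only [Equiv.apply_symm_apply]
        have hsum : pR sR (α x) + pR sR (α (x-1)) = 2 * sR - 1 := by
          rw [Nat.add_comm]; exact hE.1.2.2
        exact eq_tsub_of_add_eq hsum
      · have hncp : ¬ CompP sC sR (β (x+1)) (β (x+2)) := fun h => hEp (keyp.2 h)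
        have hnc : ¬ CompP sC sR (β x) (β (x+1)) := fun h => hE (key0.2 h)
        simp only [Lrec]
        rw [if_neg hncp, if_neg hnc, hβp, ftil_case3 sC sR φC φR f hEp hE, pR_mix]

end Aux


theorem stmt5 (sC sR : ℕ) [NeZero sC] [NeZero sR] (φC : Fin sC ≃ Fin sC)
    (φR : Fin sR ≃ Fin sR) (f : Fin sC × Fin sR → Fin sC × Fin sR)
    (hf : Function.Injective f) :
    ∀ α1 α2 : ℤ → ℕ, (∀ x : ℤ, α1 x < 4 * sC * sR) → (∀ x : ℤ, α2 x < 4 * sC * sR) →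
      Ftil sC sR φC φR f α1 = Ftil sC sR φC φR f α2 → α1 = α2 := by
  intro α1 α2 _ _ hF
  funext x
  have h1 := recon sC sR φC φR f hf α1 x
  have h2 := recon sC sR φC φR f hf α2 x
  rw [hF] at h1
  calc α1 x = pC sR (α1 x) + pR sR (α1 x) := (pC_add_pR sR _).symm
    _ = pC sR (α2 x) + pR sR (α2 x) := by rw [h1.1, h1.2, h2.1, h2.2]
    _ = α2 x := pC_add_pR sR _
end

section
/- With the automaton A of the construction (local function f̃ as above), A is finite-number-conserving: for every finite configuration α : ℤ → Q̃ (i.e., α(x) = 0 for all but finitely many x), the sum over all x ∈ ℤ of α(x) equals the sum over all x ∈ ℤ of F̃(α)(x). -/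
open scoped Classical

theorem stmt6 (sC sR : ℕ) [NeZero sC] [NeZero sR] (φC : Fin sC ≃ Fin sC)
    (φR : Fin sR ≃ Fin sR) (f : Fin sC × Fin sR → Fin sC × Fin sR)
    (hf : Function.Injective f) (α : ℤ → ℕ)
    (hα : ∀ x : ℤ, α x < 4 * sC * sR) (hfin : {x : ℤ | α x ≠ 0}.Finite) :
    ∑ᶠ x : ℤ, α x = ∑ᶠ x : ℤ, Ftil sC sR φC φR f α x := by
  classical
  have hsC : 0 < sC := Nat.pos_of_ne_zero (NeZero.ne sC)
  have hsR : 0 < sR := Nat.pos_of_ne_zero (NeZero.ne sR)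
  set N : ℕ := hfin.toFinset.sup (fun x => x.natAbs) with hNdef
  have hzero : ∀ x : ℤ, N < x.natAbs → α x = 0 := by
    intro x hx
    by_contra h
    have hm : x ∈ hfin.toFinset := hfin.mem_toFinset.mpr h
    have h2 : x.natAbs ≤ N := Finset.le_sup (f := fun x : ℤ => x.natAbs) hm
    omega
  have hzero' : ∀ x : ℤ, α x ≠ 0 → x.natAbs ≤ N := by
    intro x hx
    by_contra h
    exact hx (hzero x (by omega))
  set U : Finset ℤ := Finset.Icc (-((N : ℤ) + 3)) ((N : ℤ) + 3) with hUdef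
  have hmemU : ∀ x : ℤ, x.natAbs ≤ N + 3 → x ∈ U := by
    intro x hx
    simp only [hUdef, Finset.mem_Icc]
    omega
  have hout : ∀ x : ℤ, x ∉ U → N < x.natAbs := by
    intro x hx
    by_contra h
    exact hx (hmemU x (by omega))
  have hpR0 : pR sR 0 = 0 := by simp [pR]
  have hpC0 : pC sR 0 = 0 := by simp [pC]
  set P : ℤ → Prop := fun x => BR sR (α (x - 1)) (α x) ∧ BC sC sR (α x) (α (x + 1)) with hP
  set d : ℤ → ℕ := fun x => pC sR (α x) + pR sR (α (x - 1)) with hd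
  set A : ℤ → Fin sC × Fin sR :=
    fun y => (decC sC sR φC (pC sR (α y)), decR sR φR (pR sR (α (y - 1)))) with hA
  -- P x implies the cell is nonzero
  have hPne : ∀ x, P x → α x ≠ 0 := by
    intro x hx h0
    have h1 := hx.1.2.1
    simp only [Rcheck, h0, hpR0, Set.mem_setOf_eq] at h1
    omega
  -- P x and P (x+1) cannot both hold
  have hP1 : ∀ x, P x → ¬ P (x + 1) := by
    intro x h1 h2
    have ha1 : pR sR (α x) ∈ Rcheck sR := h1.1.2.1
    have e : x + 1 - 1 = x := by ring
    have ha2 : pR sR (α x) ∈ Rhat sR := by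
      have := h2.1.1
      rwa [e] at this
    simp only [Rcheck, Rhat, Set.mem_setOf_eq] at ha1 ha2
    omega
  have hP1' : ∀ x : ℤ, P x → ¬ P (x - 1) := by
    intro x h1 h2
    have := hP1 (x - 1) h2
    rw [sub_add_cancel] at this
    exact this h1
  -- case analysis for Ftil
  have hFtil1 : ∀ x, P x → Ftil sC sR φC φR f α x = phat sC sR φC φR (f (A x)) := by
    intro x hx
    simp only [hP] at hx
    rw [Ftil, ftil, if_pos hx]
  have hFtil2 : ∀ x, P (x - 1) → Ftil sC sR φC φR f α x = pcheck sC sR φC φR (f (A (x - 1))) := by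
    intro x hx
    have hnot : ¬ P x := fun h => hP1' x h hx
    have e1 : x - 1 - 1 = x - 2 := by ring
    have e2 : x - 1 + 1 = x := by ring
    simp only [hP, e1, e2] at hx hnot
    rw [Ftil, ftil, if_neg hnot, if_pos hx]
    simp only [hA, e1]
  have hFtil3 : ∀ x, ¬ P x → ¬ P (x - 1) → Ftil sC sR φC φR f α x = d x := by
    intro x hx1 hx2
    have e1 : x - 1 - 1 = x - 2 := by ring
    have e2 : x - 1 + 1 = x := by ring
    simp only [hP, e1, e2] at hx1 hx2
    rw [Ftil, ftil, if_neg hx1, if_neg hx2]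
  -- support of Ftil is inside U
  have hF0 : ∀ x : ℤ, x ∉ U → Ftil sC sR φC φR f α x = 0 := by
    intro x hx
    have hx4 : N + 4 ≤ x.natAbs := by
      by_contra h
      exact hx (hmemU x (by omega))
    have h0 : α x = 0 := hzero x (by omega)
    have h1 : α (x - 1) = 0 := hzero (x - 1) (by omega)
    have hnP : ¬ P x := fun h => hPne x h h0
    have hnP' : ¬ P (x - 1) := fun h => hPne (x - 1) h h1
    rw [hFtil3 x hnP hnP', hd]
    simp [h0, h1, hpR0, hpC0]
  -- key identity: phat + pcheck
  have hK : ∀ q : Fin sC × Fin sR,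
      phat sC sR φC φR q + pcheck sC sR φC φR q = 2 * (2 * sC - 1) * sR + (2 * sR - 1) := by
    intro q
    have hc : phatC sC sR φC q.1 ≤ 2 * (2 * sC - 1) * sR := by
      unfold phatC
      have h1 : (φC q.1 : ℕ) < sC := (φC q.1).2
      exact Nat.mul_le_mul_right _ (by omega)
    have hr : phatR sR φR q.2 ≤ 2 * sR - 1 := by
      unfold phatR
      have := (φR q.2).2
      omega
    unfold phat pcheck pcheckC pcheckR
    generalize 2 * (2 * sC - 1) * sR = M at hc ⊢
    omega
  -- key identity: d x + d (x+1) when P x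
  have hdK : ∀ x, P x → d x + d (x + 1) = 2 * (2 * sC - 1) * sR + (2 * sR - 1) := by
    intro x hx
    obtain ⟨hBR, hBC⟩ := hx
    have h1 := hBR.2.2
    have h2 := hBC.2.2
    have e : x + 1 - 1 = x := by ring
    simp only [hd, e]
    generalize hM : 2 * (2 * sC - 1) * sR = M at h2 ⊢
    omega
  -- membership closure
  have hclos1 : ∀ y, P y → y + 1 ∈ U := by
    intro y hy
    have := hzero' y (hPne y hy)
    exact hmemU _ (by omega)
  have hclos2 : ∀ y, P y → y ∈ U := by
    intro y hy
    have := hzero' y (hPne y hy)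
    exact hmemU _ (by omega)
  -- the splitting of U
  have hsplit : ∀ g : ℤ → ℕ, ∑ x ∈ U, g x =
      (∑ x ∈ U.filter P, g x + ∑ x ∈ U.filter (fun x => P (x - 1)), g x)
        + ∑ x ∈ U.filter (fun x => ¬ P x ∧ ¬ P (x - 1)), g x := by
    intro g
    have h1 := Finset.sum_filter_add_sum_filter_not U (fun x => P x ∨ P (x - 1)) g
    have h2 : U.filter (fun x => ¬ (P x ∨ P (x - 1))) =
        U.filter (fun x => ¬ P x ∧ ¬ P (x - 1)) := by
      apply Finset.filter_congr
      intro x _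
      tauto
    have h3 : U.filter (fun x => P x ∨ P (x - 1)) =
        U.filter P ∪ U.filter (fun x => P (x - 1)) := Finset.filter_or _ _ _
    have hdisj : Disjoint (U.filter P) (U.filter (fun x => P (x - 1))) := by
      rw [Finset.disjoint_left]
      intro x hx1 hx2
      exact hP1' x (Finset.mem_filter.mp hx1).2 (Finset.mem_filter.mp hx2).2
    rw [h2, h3, Finset.sum_union hdisj] at h1
    omega
  -- the shift bijection between filter P and filter (P ∘ (· - 1))
  have hbij : ∀ g : ℤ → ℕ, ∑ x ∈ U.filter (fun x => P (x - 1)), g x =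
      ∑ y ∈ U.filter P, g (y + 1) := by
    intro g
    refine (Finset.sum_nbij' (fun y => y + 1) (fun x => x - 1) ?_ ?_ ?_ ?_ ?_).symm
    · intro x hx
      obtain ⟨hxU, hxP⟩ := Finset.mem_filter.mp hx
      have e : x + 1 - 1 = x := by ring
      refine Finset.mem_filter.mpr ⟨hclos1 x hxP, ?_⟩
      show P (x + 1 - 1)
      rwa [e]
    · intro y hy
      obtain ⟨hyU, hyP⟩ := Finset.mem_filter.mp hy
      exact Finset.mem_filter.mpr ⟨hclos2 _ hyP, hyP⟩
    · intro x _; show x + 1 - 1 = x; ring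
    · intro y _; show y - 1 + 1 = y; ring
    · intro x hx; rfl
  -- main computation: sum of Ftil = sum of d over U
  have hkey : ∑ x ∈ U, Ftil sC sR φC φR f α x = ∑ x ∈ U, d x := by
    rw [hsplit (Ftil sC sR φC φR f α), hsplit d, hbij (Ftil sC sR φC φR f α), hbij d]
    have e1 : ∑ x ∈ U.filter (fun x => ¬ P x ∧ ¬ P (x - 1)), Ftil sC sR φC φR f α x =
        ∑ x ∈ U.filter (fun x => ¬ P x ∧ ¬ P (x - 1)), d x := by
      apply Finset.sum_congr rfl
      intro x hx
      obtain ⟨_, hx1, hx2⟩ := Finset.mem_filter.mp hx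
      exact hFtil3 x hx1 hx2
    rw [e1, ← Finset.sum_add_distrib, ← Finset.sum_add_distrib]
    congr 1
    apply Finset.sum_congr rfl
    intro y hy
    have hyP : P y := (Finset.mem_filter.mp hy).2
    have e : y + 1 - 1 = y := by ring
    rw [hFtil1 y hyP, hFtil2 (y + 1) (by rwa [e]), e, hK (f (A y)), hdK y hyP]
  -- reduce finsums to sums over U
  have hsupp1 : Function.support α ⊆ (U : Set ℤ) := by
    intro x hx
    exact hmemU x (by have := hzero' x hx; omega)
  have hsupp2 : Function.support (Ftil sC sR φC φR f α) ⊆ (U : Set ℤ) := by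
    intro x hx
    by_contra h
    exact hx (hF0 x h)
  rw [finsum_eq_sum_of_support_subset _ hsupp1,
    finsum_eq_sum_of_support_subset _ hsupp2, hkey]
  -- finally: sum of d = sum of α over U
  have hshift : ∑ x ∈ U, pR sR (α (x - 1)) = ∑ x ∈ U, pR sR (α x) := by
    have h1 : ∑ x ∈ U, pR sR (α (x - 1)) =
        ∑ x ∈ Finset.Icc (-((N : ℤ) + 4)) ((N : ℤ) + 2), pR sR (α x) := by
      refine Finset.sum_nbij' (fun x => x - 1) (fun y => y + 1) ?_ ?_ ?_ ?_ ?_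
      · intro x hx
        simp only [hUdef, Finset.mem_Icc] at hx ⊢
        omega
      · intro y hy
        simp only [hUdef, Finset.mem_Icc] at hy ⊢
        omega
      · intro x _; ring
      · intro y _; ring
      · intro x _; rfl
    rw [h1]
    have hsub1 : Finset.Icc (-((N : ℤ) + 4)) ((N : ℤ) + 2) ⊆
        Finset.Icc (-((N : ℤ) + 4)) ((N : ℤ) + 3) := by
      apply Finset.Icc_subset_Icc le_rfl
      omega
    have hsub2 : U ⊆ Finset.Icc (-((N : ℤ) + 4)) ((N : ℤ) + 3) := by
      simp only [hUdef]
      apply Finset.Icc_subset_Icc _ le_rfl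
      omega
    rw [Finset.sum_subset hsub1, Finset.sum_subset hsub2]
    · intro x hx1 hx2
      have : N < x.natAbs := by
        simp only [hUdef, Finset.mem_Icc] at hx1 hx2
        omega
      rw [hzero x this, hpR0]
    · intro x hx1 hx2
      have : N < x.natAbs := by
        simp only [hUdef, Finset.mem_Icc] at hx1 hx2
        omega
      rw [hzero x this, hpR0]
  simp only [hd]
  rw [Finset.sum_add_distrib, hshift, ← Finset.sum_add_distrib]
  apply Finset.sum_congr rfl
  intro x _
  simp only [pC, pR]
  exact (Nat.div_add_mod (α x) (2 * sR)).symm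
end

section
/- In the construction of A, if (α(x),α(x+1)) ∈ B_C then p_C(α(x)) + p_C(α(x+1)) = p_C(F̃(α)(x)) + p_C(F̃(α)(x+1)); and if (α(x−1),α(x)) ∉ B_C and (α(x),α(x+1)) ∉ B_C then p_C(α(x)) = p_C(F̃(α)(x)). -/
open scoped Classical

theorem stmt8 (sC sR : ℕ) [NeZero sC] [NeZero sR] (φC : Fin sC ≃ Fin sC)
    (φR : Fin sR ≃ Fin sR) (f : Fin sC × Fin sR → Fin sC × Fin sR)
    (hf : Function.Injective f) (α : ℤ → ℕ)
    (hα : ∀ x : ℤ, α x < 4 * sC * sR) (x : ℤ) :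
    (BC sC sR (α x) (α (x + 1)) →
      pC sR (α x) + pC sR (α (x + 1)) =
        pC sR (Ftil sC sR φC φR f α x) + pC sR (Ftil sC sR φC φR f α (x + 1))) ∧
    (¬ BC sC sR (α (x - 1)) (α x) → ¬ BC sC sR (α x) (α (x + 1)) →
      pC sR (α x) = pC sR (Ftil sC sR φC φR f α x)) := by

  have hsR : 0 < sR := Nat.pos_of_ne_zero (NeZero.ne sR)
  have hsC : 0 < sC := Nat.pos_of_ne_zero (NeZero.ne sC)
  have h2sR : 0 < 2 * sR := by omega
  have key : ∀ k r : ℕ, r < 2 * sR → pC sR (2 * sR * k + r) = 2 * sR * k := by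
    intro k r hr
    unfold pC
    rw [Nat.mul_add_div h2sR, Nat.div_eq_of_lt hr, Nat.add_zero]
  have hpR : ∀ q, pR sR q < 2 * sR := fun q => Nat.mod_lt _ h2sR
  have pC_case3 : ∀ q r : ℕ, pC sR (pC sR q + pR sR r) = pC sR q := by
    intro q r
    have : pC sR q = 2 * sR * (q / (2 * sR)) := rfl
    rw [this, key _ _ (hpR r)]
  have pC_phat : ∀ q, pC sR (phat sC sR φC φR q) = 2 * sR * (φC q.1 : ℕ) := by
    intro q
    have he : phat sC sR φC φR q = 2 * sR * (φC q.1 : ℕ) + (φR q.2 : ℕ) := by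
      unfold phat phatC phatR; ring
    rw [he, key _ _ (by have := (φR q.2).isLt; omega)]
  have pC_pcheck : ∀ q, pC sR (pcheck sC sR φC φR q)
      = 2 * sR * (2 * sC - 1 - (φC q.1 : ℕ)) := by
    intro q
    have h1 : (φC q.1 : ℕ) < sC := (φC q.1).isLt
    have h2 : (φR q.2 : ℕ) < sR := (φR q.2).isLt
    have he : pcheck sC sR φC φR q
        = 2 * sR * (2 * sC - 1 - (φC q.1 : ℕ)) + (2 * sR - 1 - (φR q.2 : ℕ)) := by
      unfold pcheck pcheckC pcheckR phatC phatR
      have e1 : 2 * (2 * sC - 1) * sR - 2 * (φC q.1 : ℕ) * sR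
          = 2 * sR * (2 * sC - 1 - (φC q.1 : ℕ)) := by
        obtain ⟨m, hm⟩ : ∃ m, 2 * sC - 1 = (φC q.1 : ℕ) + m := ⟨2 * sC - 1 - (φC q.1 : ℕ), by omega⟩
        rw [hm, show (φC q.1 : ℕ) + m - (φC q.1 : ℕ) = m from by omega,
          show 2 * ((φC q.1 : ℕ) + m) * sR = 2 * (φC q.1 : ℕ) * sR + 2 * sR * m from by ring]
        omega
      rw [e1]
    rw [he, key _ _ (by omega)]
  have disj : ∀ n, n ∈ Chat sC sR → n ∈ Ccheck sC sR → False := by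
    rintro n ⟨k, hk, rfl⟩ ⟨k', hk', he⟩
    have h2 : k * (2 * sR) = (k' + sC) * (2 * sR) := by
      have : 2 * k * sR = 2 * (k' + sC) * sR := he
      ring_nf
      ring_nf at this
      omega
    have := Nat.eq_of_mul_eq_mul_right h2sR h2
    omega
  have e1 : x + 1 - 2 = x - 1 := by ring
  have e2 : x + 1 - 1 = x := by ring
  have hFx : Ftil sC sR φC φR f α x
      = ftil sC sR φC φR f (α (x - 2)) (α (x - 1)) (α x) (α (x + 1)) := rfl
  have hFx1 : Ftil sC sR φC φR f α (x + 1)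
      = ftil sC sR φC φR f (α (x - 1)) (α x) (α (x + 1)) (α (x + 1 + 1)) := by
    unfold Ftil
    rw [e1, e2]
  constructor
  · intro hBC
    have hnot1 : ¬ BC sC sR (α (x + 1)) (α (x + 1 + 1)) := by
      intro h
      exact disj _ h.1 hBC.2.1
    have hnot2 : ¬ BC sC sR (α (x - 1)) (α x) := by
      intro h
      exact disj _ hBC.1 h.2.1
    by_cases hBR : BR sR (α (x - 1)) (α x)
    · -- case 1 at x, case 2 at x+1, same decoded pair
      rw [hFx, hFx1]
      unfold ftil
      rw [if_pos ⟨hBR, hBC⟩, if_neg (fun h => hnot1 h.2), if_pos ⟨hBR, hBC⟩]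
      set q := f (decC sC sR φC (pC sR (α x)), decR sR φR (pR sR (α (x - 1)))) with hq
      rw [pC_phat, pC_pcheck, ← Nat.mul_add]
      have h1 : (φC q.1 : ℕ) < sC := (φC q.1).isLt
      have : (φC q.1 : ℕ) + (2 * sC - 1 - (φC q.1 : ℕ)) = 2 * sC - 1 := by omega
      rw [this, hBC.2.2]
      ring
    · rw [hFx, hFx1]
      unfold ftil
      rw [if_neg (fun h => hBR h.1), if_neg (fun h => hnot2 h.2),
        if_neg (fun h => hnot1 h.2), if_neg (fun h => hBR h.1)]
      rw [pC_case3, pC_case3]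
  · intro h1 h2
    rw [hFx]
    unfold ftil
    rw [if_neg (fun h => h2 h.2), if_neg (fun h => h1 h.2), pC_case3]
end

section
/- Define the encoding τ̃ : Conf(C×R) → Conf(Q̃) by τ̃(α)(2x) = φ̂(α(x)) and τ̃(α)(2x+1) = φ̌(α(x)). Then for every configuration α of P: (p_C(τ̃(α)(2x)), p_C(τ̃(α)(2x+1))) ∈ B_C for all x ∈ ℤ, but (p_R(τ̃(α)(2x−1)), p_R(τ̃(α)(2x))) ∉ B_R for all x ∈ ℤ, where membership refers to the heavy/light complementary pair conditions. -/
open scoped Classical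

lemma split_div (sR m l : ℕ) (h : l < 2 * sR) : (2 * m * sR + l) / (2 * sR) = m := by
  have : 2 * m * sR = m * (2 * sR) := by ring
  rw [this, Nat.add_comm, mul_comm m (2 * sR), Nat.add_mul_div_left _ _ (by omega : 0 < 2 * sR),
    Nat.div_eq_of_lt h, Nat.zero_add]

lemma split_mod (sR m l : ℕ) (h : l < 2 * sR) : (2 * m * sR + l) % (2 * sR) = l := by
  have : 2 * m * sR = m * (2 * sR) := by ring
  rw [this, Nat.add_comm, mul_comm m (2 * sR), Nat.add_mul_mod_self_left, Nat.mod_eq_of_lt h]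

lemma pC_split (sR m l : ℕ) (h : l < 2 * sR) : pC sR (2 * m * sR + l) = 2 * m * sR := by
  unfold pC; rw [split_div sR m l h]; ring

lemma pR_split (sR m l : ℕ) (h : l < 2 * sR) : pR sR (2 * m * sR + l) = l := by
  unfold pR; exact split_mod sR m l h

theorem stmt10 (sC sR : ℕ) (hsC : 0 < sC) (hsR : 0 < sR) (φC : Fin sC ≃ Fin sC)
    (φR : Fin sR ≃ Fin sR) (α : ℤ → Fin sC × Fin sR) (x : ℤ) :
    BC sC sR (tenc sC sR φC φR α (2 * x)) (tenc sC sR φC φR α (2 * x + 1)) ∧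
    ¬ BR sR (tenc sC sR φC φR α (2 * x - 1)) (tenc sC sR φC φR α (2 * x)) := by
  set k : ℕ := (φC (α x).1 : ℕ) with hk
  set j : ℕ := (φR (α x).2 : ℕ) with hj
  have hkl : k < sC := (φC (α x).1).2
  have hjl : j < sR := (φR (α x).2).2
  have heven : Even (2 * x) := ⟨x, by ring⟩
  have hodd : ¬ Even (2 * x + 1) := by simp [Int.even_add_one, heven]
  have hodd' : ¬ Even (2 * x - 1) := by
    rintro ⟨y, hy⟩; omega
  have e0 : tenc sC sR φC φR α (2 * x) = 2 * k * sR + j := by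
    simp only [tenc, if_pos heven]
    have : 2 * x / 2 = x := by omega
    rw [this]; rfl
  have e1 : tenc sC sR φC φR α (2 * x + 1)
      = 2 * (2 * sC - 1 - k) * sR + (2 * sR - 1 - j) := by
    simp only [tenc, if_neg hodd]
    have : (2 * x + 1 - 1) / 2 = x := by omega
    rw [this]
    show 2 * (2 * sC - 1) * sR - 2 * k * sR + (2 * sR - 1 - j) = _
    congr 1
    have h1 : 2 * (2 * sC - 1 - k) = 2 * (2 * sC - 1) - 2 * k := by omega
    rw [h1, Nat.sub_mul]
  set m : ℕ := 2 * sC - 1 - k with hm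
  have hml : 2 * sR - 1 - j < 2 * sR := by omega
  constructor
  · refine ⟨?_, ?_, ?_⟩
    · rw [e0, pC_split sR k j (by omega)]
      exact ⟨k, hkl, rfl⟩
    · rw [e1, pC_split sR m _ hml]
      refine ⟨m - sC, by omega, ?_⟩
      congr 2
      omega
    · rw [e0, e1, pC_split sR k j (by omega), pC_split sR m _ hml]
      have hke : k + m = 2 * sC - 1 := by omega
      have h2 : 2 * (k + m) * sR = 2 * k * sR + 2 * m * sR := by ring
      rw [hke] at h2
      exact h2.symm
  · intro ⟨_, h2, _⟩
    rw [e0, pR_split sR k j (by omega)] at h2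
    exact absurd h2.1 (by omega)
end

section
/- The constructed 4-neighbor CA A simulates the 2-neighbor RPCA P in two steps: for every configuration α : ℤ → C×R and every x ∈ ℤ, F̃²(τ̃(α))(2x) = τ̃(F(α))(2x) and F̃²(τ̃(α))(2x+1) = τ̃(F(α))(2x+1), where F is the global function of P and F̃ that of A; i.e., F̃² ∘ τ̃ = τ̃ ∘ F. -/
open scoped Classical

theorem stmt11 (sC sR : ℕ) [NeZero sC] [NeZero sR] (φC : Fin sC ≃ Fin sC)
    (φR : Fin sR ≃ Fin sR) (f : Fin sC × Fin sR → Fin sC × Fin sR)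
    (hf : Function.Injective f) (α : ℤ → Fin sC × Fin sR) (x : ℤ) :
    Ftil sC sR φC φR f (Ftil sC sR φC φR f (tenc sC sR φC φR α)) (2 * x) =
      tenc sC sR φC φR (FP f α) (2 * x) ∧
    Ftil sC sR φC φR f (Ftil sC sR φC φR f (tenc sC sR φC φR α)) (2 * x + 1) =
      tenc sC sR φC φR (FP f α) (2 * x + 1) := by

  have hsR : 0 < sR := Nat.pos_of_ne_zero (NeZero.ne sR)
  have hsC : 0 < sC := Nat.pos_of_ne_zero (NeZero.ne sC)
  -- basic bounds
  have hphatR_lt : ∀ r, phatR sR φR r < sR := fun r => (φR r).isLt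
  have hphatR_lt2 : ∀ r, phatR sR φR r < 2*sR := fun r => lt_of_lt_of_le (hphatR_lt r) (by omega)
  have hpcheckR_ge : ∀ r, sR ≤ pcheckR sR φR r := by
    intro r; have := (φR r).isLt; unfold pcheckR phatR at *; omega
  have hpcheckR_lt : ∀ r, pcheckR sR φR r < 2*sR := by
    intro r; unfold pcheckR phatR; omega
  have hpcheckC_eq : ∀ c, pcheckC sC sR φC c = 2*(2*sC-1-(φC c : ℕ))*sR := by
    intro c
    have := (φC c).isLt
    unfold pcheckC phatC
    rw [← Nat.sub_mul]
    congr 2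
    omega
  have key : ∀ k r : ℕ, r < 2*sR → pC sR (2*k*sR + r) = 2*k*sR ∧ pR sR (2*k*sR + r) = r := by
    intro k r hr
    have h2 : 2*k*sR + r = 2*sR*k + r := by ring
    refine ⟨?_, ?_⟩
    · show 2*sR*((2*k*sR + r)/(2*sR)) = 2*k*sR
      rw [h2, Nat.mul_add_div (by omega), Nat.div_eq_of_lt hr, Nat.add_zero]
      ring
    · show (2*k*sR + r) % (2*sR) = r
      rw [h2, Nat.mul_add_mod, Nat.mod_eq_of_lt hr]
  have shape : ∀ (a b : ℕ), (∃ k, a = 2*k*sR) → b < 2*sR → pC sR (a+b) = a ∧ pR sR (a+b) = b := by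
    rintro a b ⟨k, rfl⟩ hb; exact key k b hb
  have hshape1 : ∀ c, ∃ k, phatC sC sR φC c = 2*k*sR := fun c => ⟨_, rfl⟩
  have hshape2 : ∀ c, ∃ k, pcheckC sC sR φC c = 2*k*sR := fun c => ⟨_, hpcheckC_eq c⟩
  -- pC / pR of the four kinds of cell values
  have hpC1 : ∀ c r, pC sR (phatC sC sR φC c + pcheckR sR φR r) = phatC sC sR φC c :=
    fun c r => (shape _ _ (hshape1 c) (hpcheckR_lt r)).1
  have hpR1 : ∀ c r, pR sR (phatC sC sR φC c + pcheckR sR φR r) = pcheckR sR φR r :=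
    fun c r => (shape _ _ (hshape1 c) (hpcheckR_lt r)).2
  have hpC2 : ∀ c r, pC sR (pcheckC sC sR φC c + phatR sR φR r) = pcheckC sC sR φC c :=
    fun c r => (shape _ _ (hshape2 c) (hphatR_lt2 r)).1
  have hpR2 : ∀ c r, pR sR (pcheckC sC sR φC c + phatR sR φR r) = phatR sR φR r :=
    fun c r => (shape _ _ (hshape2 c) (hphatR_lt2 r)).2
  have hpChat : ∀ q, pC sR (phat sC sR φC φR q) = phatC sC sR φC q.1 :=
    fun q => (shape _ _ (hshape1 q.1) (hphatR_lt2 q.2)).1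
  have hpRhat : ∀ q, pR sR (phat sC sR φC φR q) = phatR sR φR q.2 :=
    fun q => (shape _ _ (hshape1 q.1) (hphatR_lt2 q.2)).2
  have hpCcheck : ∀ q, pC sR (pcheck sC sR φC φR q) = pcheckC sC sR φC q.1 :=
    fun q => (shape _ _ (hshape2 q.1) (hpcheckR_lt q.2)).1
  have hpRcheck : ∀ q, pR sR (pcheck sC sR φC φR q) = pcheckR sR φR q.2 :=
    fun q => (shape _ _ (hshape2 q.1) (hpcheckR_lt q.2)).2
  -- memberships
  have hChat : ∀ c, phatC sC sR φC c ∈ Chat sC sR := fun c => ⟨(φC c : ℕ), (φC c).isLt, rfl⟩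
  have hCcheck : ∀ c, pcheckC sC sR φC c ∈ Ccheck sC sR := by
    intro c
    refine ⟨sC - 1 - (φC c : ℕ), by omega, ?_⟩
    rw [hpcheckC_eq]
    have := (φC c).isLt
    congr 2
    omega
  have hRhat : ∀ r, phatR sR φR r ∈ Rhat sR := fun r => hphatR_lt r
  have hRcheck : ∀ r, pcheckR sR φR r ∈ Rcheck sR := fun r => ⟨hpcheckR_ge r, hpcheckR_lt r⟩
  have hsumR : ∀ r, phatR sR φR r + pcheckR sR φR r = 2*sR - 1 := by
    intro r; have := (φR r).isLt; unfold pcheckR phatR at *; omega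
  have hsumC : ∀ c, phatC sC sR φC c + pcheckC sC sR φC c = 2*(2*sC-1)*sR := by
    intro c
    have h1 : phatC sC sR φC c ≤ 2*(2*sC-1)*sR := by
      unfold phatC
      have := (φC c).isLt
      have h2 : 2*(φC c : ℕ) ≤ 2*(2*sC-1) := by omega
      exact Nat.mul_le_mul h2 le_rfl
    unfold pcheckC
    omega
  -- negative memberships
  have hNRhat : ∀ r, pcheckR sR φR r ∉ Rhat sR := by
    intro r h
    have := hpcheckR_ge r
    have h2 : pcheckR sR φR r < sR := h
    omega
  have hNChat : ∀ c, pcheckC sC sR φC c ∉ Chat sC sR := by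
    intro c h
    obtain ⟨k, hk, heq⟩ := h
    rw [hpcheckC_eq] at heq
    have hm := (φC c).isLt
    have h3 : 2*(2*sC-1-(φC c : ℕ)) = 2*k := by
      have h4 : (2*(2*sC-1-(φC c : ℕ)))*sR = (2*k)*sR := by
        exact heq
      exact Nat.eq_of_mul_eq_mul_right hsR h4
    omega
  -- decodings
  have hdecC : ∀ c, decC sC sR φC (phatC sC sR φC c) = c := by
    intro c
    unfold decC phatC
    have h1 : 2 * (φC c : ℕ) * sR / (2*sR) = (φC c : ℕ) := by
      rw [show 2*(φC c:ℕ)*sR = (2*sR)*(φC c:ℕ) by ring, Nat.mul_div_cancel_left _ (by omega)]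
    simp [h1, Nat.mod_eq_of_lt (φC c).isLt]
  have hdecR : ∀ r, decR sR φR (phatR sR φR r) = r := by
    intro r
    unfold decR phatR
    simp [Nat.mod_eq_of_lt (φR r).isLt]
  -- tenc values
  have hte : ∀ (δ : ℤ → Fin sC × Fin sR) (z : ℤ),
      tenc sC sR φC φR δ (2*z) = phat sC sR φC φR (δ z) := by
    intro δ z
    unfold tenc
    rw [if_pos ⟨z, two_mul z⟩]
    congr 2
    omega
  have hto : ∀ (δ : ℤ → Fin sC × Fin sR) (z : ℤ),
      tenc sC sR φC φR δ (2*z+1) = pcheck sC sR φC φR (δ z) := by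
    intro δ z
    unfold tenc
    rw [if_neg (by rw [Int.even_iff]; omega)]
    congr 2
    omega
  -- first step values
  have hγe : ∀ z : ℤ, Ftil sC sR φC φR f (tenc sC sR φC φR α) (2*z)
      = phatC sC sR φC (α z).1 + pcheckR sR φR (α (z-1)).2 := by
    intro z
    have e1 : (2*z - 2 : ℤ) = 2*(z-1) := by ring
    have e2 : (2*z - 1 : ℤ) = 2*(z-1)+1 := by ring
    unfold Ftil
    rw [e1, e2, hte, hto, hte α z, hto α z]
    unfold ftil
    rw [if_neg, if_neg]
    · rw [hpChat, hpRcheck]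
    · rintro ⟨hBR, hBC⟩
      have := hBC.1
      rw [hpCcheck] at this
      exact hNChat _ this
    · rintro ⟨hBR, hBC⟩
      have := hBR.1
      rw [hpRcheck] at this
      exact hNRhat _ this
  have hγo : ∀ z : ℤ, Ftil sC sR φC φR f (tenc sC sR φC φR α) (2*z+1)
      = pcheckC sC sR φC (α z).1 + phatR sR φR (α z).2 := by
    intro z
    have e1 : (2*z + 1 - 2 : ℤ) = 2*(z-1)+1 := by ring
    have e2 : (2*z + 1 - 1 : ℤ) = 2*z := by ring
    have e3 : (2*z + 1 + 1 : ℤ) = 2*(z+1) := by ring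
    unfold Ftil
    rw [e1, e2, e3, hto, hte, hto α z, hte α (z+1)]
    unfold ftil
    rw [if_neg, if_neg]
    · rw [hpCcheck, hpRhat]
    · rintro ⟨hBR, hBC⟩
      have := hBR.1
      rw [hpRcheck] at this
      exact hNRhat _ this
    · rintro ⟨hBR, hBC⟩
      have := hBR.2.1
      rw [hpRcheck] at this
      have h2 := this.1
      have := hpcheckR_lt ((α z).2)
      have h3 := hBR.1
      rw [hpRhat] at h3
      -- cond1 : BR (phat (α z)) (pcheck (α z)) ∧ BC (pcheck (α z)) (phat (α (z+1)))
      have h4 := hBC.1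
      rw [hpCcheck] at h4
      exact hNChat _ h4
  -- second step
  constructor
  · -- even site
    have e1 : (2*x - 2 : ℤ) = 2*(x-1) := by ring
    have e2 : (2*x - 1 : ℤ) = 2*(x-1)+1 := by ring
    show ftil sC sR φC φR f
        (Ftil sC sR φC φR f (tenc sC sR φC φR α) (2*x-2))
        (Ftil sC sR φC φR f (tenc sC sR φC φR α) (2*x-1))
        (Ftil sC sR φC φR f (tenc sC sR φC φR α) (2*x))
        (Ftil sC sR φC φR f (tenc sC sR φC φR α) (2*x+1)) = _
    rw [e1, e2, hγe (x-1), hγo (x-1), hγe x, hγo x]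
    unfold ftil
    rw [if_pos]
    · rw [hpC1, hpR2, hdecC, hdecR, hte (FP f α) x]
      rfl
    · refine ⟨⟨?_, ?_, ?_⟩, ?_, ?_, ?_⟩
      · rw [hpR2]; exact hRhat _
      · rw [hpR1]; exact hRcheck _
      · rw [hpR2, hpR1]; exact hsumR _
      · rw [hpC1]; exact hChat _
      · rw [hpC2]; exact hCcheck _
      · rw [hpC1, hpC2]; exact hsumC _
  · -- odd site
    have e1 : (2*x + 1 - 2 : ℤ) = 2*(x-1)+1 := by ring
    have e2 : (2*x + 1 - 1 : ℤ) = 2*x := by ring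
    have e3 : (2*x + 1 + 1 : ℤ) = 2*(x+1) := by ring
    show ftil sC sR φC φR f
        (Ftil sC sR φC φR f (tenc sC sR φC φR α) (2*x+1-2))
        (Ftil sC sR φC φR f (tenc sC sR φC φR α) (2*x+1-1))
        (Ftil sC sR φC φR f (tenc sC sR φC φR α) (2*x+1))
        (Ftil sC sR φC φR f (tenc sC sR φC φR α) (2*x+1+1)) = _
    rw [e1, e2, e3, hγo (x-1), hγe x, hγo x, hγe (x+1)]
    unfold ftil
    rw [if_neg, if_pos]
    · rw [hpC1, hpR2, hdecC, hdecR, hto (FP f α) x]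
      rfl
    · refine ⟨⟨?_, ?_, ?_⟩, ?_, ?_, ?_⟩
      · rw [hpR2]; exact hRhat _
      · rw [hpR1]; exact hRcheck _
      · rw [hpR2, hpR1]; exact hsumR _
      · rw [hpC1]; exact hChat _
      · rw [hpC2]; exact hCcheck _
      · rw [hpC1, hpC2]; exact hsumC _
    · rintro ⟨hBR, hBC⟩
      have := hBR.1
      rw [hpR1] at this
      exact hNRhat _ this
end

section
/- If a configuration α : ℤ → Q̃ contains no B_R-pair adjacent-left to a B_C-pair anywhere (i.e., there is no y with (α(y−1),α(y)) ∈ B_R and (α(y),α(y+1)) ∈ B_C), then F̃ acts on α as a pure drift: for all x, p_C(F̃(α)(x)) = p_C(α(x)) and p_R(F̃(α)(x)) = p_R(α(x−1)). -/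
open scoped Classical

theorem stmt15 (sC sR : ℕ) [NeZero sC] [NeZero sR] (φC : Fin sC ≃ Fin sC)
    (φR : Fin sR ≃ Fin sR) (f : Fin sC × Fin sR → Fin sC × Fin sR)
    (hf : Function.Injective f) (α : ℤ → ℕ)
    (hα : ∀ x : ℤ, α x < 4 * sC * sR)
    (hno : ∀ y : ℤ, ¬ (BR sR (α (y - 1)) (α y) ∧ BC sC sR (α y) (α (y + 1)))) :
    ∀ x : ℤ, pC sR (Ftil sC sR φC φR f α x) = pC sR (α x) ∧
      pR sR (Ftil sC sR φC φR f α x) = pR sR (α (x - 1)) := by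
  intro x
  have hsR : 0 < sR := Nat.pos_of_ne_zero (NeZero.ne sR)
  have h2 : 0 < 2 * sR := by omega
  have hF : Ftil sC sR φC φR f α x = pC sR (α x) + pR sR (α (x - 1)) := by
    unfold Ftil ftil
    rw [if_neg, if_neg]
    · have := hno (x - 1)
      have e : x - 1 - 1 = x - 2 := by ring
      rw [e] at this
      simpa using this
    · have := hno x
      simpa using this
  have hrlt : pR sR (α (x - 1)) < 2 * sR := Nat.mod_lt _ h2
  constructor
  · rw [hF]
    unfold pC
    congr 1
    rw [Nat.mul_add_div h2, Nat.div_eq_of_lt hrlt, Nat.add_zero]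
  · rw [hF]
    unfold pR pC
    rw [Nat.add_mod, Nat.mul_mod_right, Nat.zero_add, Nat.mod_mod_of_dvd _ dvd_rfl, Nat.mod_mod_of_dvd _ dvd_rfl]
end

section
/- A 2-neighbor CA whose local function f(q₋₁,q₀) = p_C(q₀) + p_R(q₋₁) for states in Q̃ = {0,...,4sC·sR−1} (heavy part stationary, light part shifting right) is both reversible (its global function is injective) and finite-number-conserving. -/
open scoped Classical

theorem stmt16 (sC sR : ℕ) (hsC : 0 < sC) (hsR : 0 < sR) :
    (∀ α1 α2 : ℤ → ℕ, (∀ x : ℤ, α1 x < 4 * sC * sR) → (∀ x : ℤ, α2 x < 4 * sC * sR) →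
      (fun x : ℤ => pC sR (α1 x) + pR sR (α1 (x - 1))) =
        (fun x : ℤ => pC sR (α2 x) + pR sR (α2 (x - 1))) → α1 = α2) ∧
    (∀ α : ℤ → ℕ, (∀ x : ℤ, α x < 4 * sC * sR) → {x : ℤ | α x ≠ 0}.Finite →
      ∑ᶠ x : ℤ, α x = ∑ᶠ x : ℤ, (pC sR (α x) + pR sR (α (x - 1)))) := by

  have h2 : 0 < 2 * sR := by positivity
  have hsum : ∀ q : ℕ, pC sR q + pR sR q = q := fun q => Nat.div_add_mod q (2 * sR)
  have key : ∀ q p : ℕ, (pC sR q + pR sR p) % (2 * sR) = pR sR p := by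
    intro q p
    simp [pC, pR, Nat.mul_add_mod, Nat.mod_mod_of_dvd]
  constructor
  · intro α1 α2 _ _ heq
    have hR : ∀ y : ℤ, pR sR (α1 y) = pR sR (α2 y) := by
      intro y
      have h := congrFun heq (y + 1)
      simp only [add_sub_cancel_right] at h
      have := congrArg (· % (2 * sR)) h
      simpa [key] using this
    funext x
    have h := congrFun heq x
    have hC : pC sR (α1 x) = pC sR (α2 x) := by
      have := hR (x - 1); omega
    have := hsum (α1 x); have := hsum (α2 x); have := hR x; omega
  · intro α hb hfin
    have hCfin : (Function.support fun x => pC sR (α x)).Finite := by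
      apply hfin.subset
      intro x hx
      simp only [Function.mem_support, Set.mem_setOf_eq] at hx ⊢
      intro h0; apply hx; simp [pC, h0]
    have hRfin : (Function.support fun x => pR sR (α x)).Finite := by
      apply hfin.subset
      intro x hx
      simp only [Function.mem_support, Set.mem_setOf_eq] at hx ⊢
      intro h0; apply hx; simp [pR, h0]
    have hRfin' : (Function.support fun x => pR sR (α (x - 1))).Finite := by
      have := hRfin.preimage (f := fun x : ℤ => x - 1) (Set.injOn_of_injective (sub_left_injective))
      exact this
    have hshift : ∑ᶠ x : ℤ, pR sR (α (x - 1)) = ∑ᶠ x : ℤ, pR sR (α x) :=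
      finsum_comp_equiv (Equiv.subRight (1 : ℤ)) (f := fun x => pR sR (α x))
    calc ∑ᶠ x : ℤ, α x = ∑ᶠ x : ℤ, (pC sR (α x) + pR sR (α x)) := by
          congr 1; funext x; rw [hsum]
      _ = (∑ᶠ x : ℤ, pC sR (α x)) + ∑ᶠ x : ℤ, pR sR (α x) :=
          finsum_add_distrib hCfin hRfin
      _ = (∑ᶠ x : ℤ, pC sR (α x)) + ∑ᶠ x : ℤ, pR sR (α (x - 1)) := by rw [hshift]
      _ = ∑ᶠ x : ℤ, (pC sR (α x) + pR sR (α (x - 1))) :=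
          (finsum_add_distrib hCfin hRfin').symm
end
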